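/- Let F be a field, f ∈ F[X_1,...,X_n], and suppose X^α has nonzero coefficient in f and is a maximal monomial in f. Let (A_1,m_1),...,(A_n,m_n) be multisets in F (A_i ⊆ F finite, m_i : A_i → ℕ) with Σ_{a∈A_i} m_i(a) ≥ α_i + 1 for all i. Then there exist a_i ∈ A_i and r_i with 0 ≤ r_i ≤ m_i(a_i)-1 for each i, such that the Hasse derivative H^{(r_1,...,r_n)}f evaluated at (a_1,...,a_n) is nonzero. -/

import Mathlib

/-- The multivariate Hasse derivative `H^(r)`, acting on monomials by
`H^(r) X^β = (∏ i, C(β i, r i)) • X^(β - r)`. -/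
noncomputable def mvHasseDeriv {F : Type*} [CommRing F] {n : ℕ} (r : Fin n →₀ ℕ)
    (f : MvPolynomial (Fin n) F) : MvPolynomial (Fin n) F :=
  ∑ β ∈ f.support,
    MvPolynomial.monomial (β - r) (((∏ i, (β i).choose (r i) : ℕ) : F) * f.coeff β)

private lemma exists_le_sum_eq {X : Type*} (s : Finset X) (g : X → ℕ) (N : ℕ)
    (h : N ≤ ∑ a ∈ s, g a) :
    ∃ g' : X → ℕ, (∀ a, g' a ≤ g a) ∧ ∑ a ∈ s, g' a = N := by
  classical
  induction s using Finset.induction_on generalizing N with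
  | empty =>
      refine ⟨fun _ => 0, fun _ => Nat.zero_le _, ?_⟩
      simp only [Finset.sum_empty] at h ⊢
      omega
  | @insert a s ha ih =>
      rw [Finset.sum_insert ha] at h
      obtain ⟨g'', hle, hsum⟩ := ih (N - min N (g a)) (by omega)
      refine ⟨Function.update g'' a (min N (g a)), ?_, ?_⟩
      · intro b
        by_cases hb : b = a
        · subst hb; rw [Function.update_self]; omega
        · rw [Function.update_of_ne hb]; exact hle b
      · rw [Finset.sum_insert ha, Function.update_self]
        have hrest : ∑ x ∈ s, Function.update g'' a (min N (g a)) x = ∑ x ∈ s, g'' x :=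
          Finset.sum_congr rfl fun b hb => by
            have hba : b ≠ a := fun hba => ha (hba ▸ hb)
            exact Function.update_of_ne hba _ _
        rw [hrest, hsum]
        omega

private noncomputable def hermiteFun {F : Type*} [Field F] (d : ℕ) (t : Σ _ : F, ℕ) :
    (Fin (d + 1) → F) →ₗ[F] F :=
  ∑ k : Fin (d + 1), ((((k : ℕ).choose t.2 : F)) * t.1 ^ ((k : ℕ) - t.2)) • LinearMap.proj k

private lemma hermiteFun_apply {F : Type*} [Field F] (d : ℕ) (t : Σ _ : F, ℕ)
    (w : Fin (d + 1) → F) :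
    hermiteFun d t w = ∑ k : Fin (d + 1),
      (((k : ℕ).choose t.2 : F) * t.1 ^ ((k : ℕ) - t.2)) * w k := by
  simp [hermiteFun]

private lemma exists_hermite_coeffs {F : Type*} [Field F] (B : Finset F) (m : F → ℕ) (d : ℕ)
    (hd : ∑ a ∈ B, m a = d + 1) :
    ∃ c : F → ℕ → F, ∀ k, k ≤ d →
      (∑ a ∈ B, ∑ r ∈ Finset.range (m a),
        c a r * ((k.choose r : F) * a ^ (k - r))) = if k = d then 1 else 0 := by
  classical
  set T : Finset (Σ _ : F, ℕ) := B.sigma (fun a => Finset.range (m a)) with hT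
  have hker : (⨅ t : ↥T, LinearMap.ker (hermiteFun d (t : Σ _ : F, ℕ)))
      ≤ LinearMap.ker (LinearMap.proj (R := F) (φ := fun _ : Fin (d + 1) => F) (Fin.last d)) := by
    intro w hw
    simp only [Submodule.mem_iInf, LinearMap.mem_ker] at hw ⊢
    set g : Polynomial F := ∑ k : Fin (d + 1), Polynomial.monomial (k : ℕ) (w k) with hg
    have hcoeff : ∀ j : Fin (d + 1), g.coeff (j : ℕ) = w j := by
      intro j
      rw [hg, Polynomial.finset_sum_coeff, Finset.sum_eq_single j
        (fun b _ hb => by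
          rw [Polynomial.coeff_monomial, if_neg (by simpa [Fin.val_eq_val] using hb)])
        (fun h => absurd (Finset.mem_univ j) h)]
      rw [Polynomial.coeff_monomial, if_pos rfl]
    have heval : ∀ (a : F) (r : ℕ), (Polynomial.hasseDeriv r g).eval a
        = ∑ k : Fin (d + 1), (((k : ℕ).choose r : F) * a ^ ((k : ℕ) - r)) * w k := by
      intro a r
      rw [hg, map_sum, Polynomial.eval_finset_sum]
      refine Finset.sum_congr rfl fun k _ => ?_
      rw [Polynomial.hasseDeriv_monomial, Polynomial.eval_monomial]
      ring
    have hdvd : ∀ a ∈ B, (Polynomial.X - Polynomial.C a) ^ (m a) ∣ g := by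
      intro a ha
      rw [Polynomial.X_sub_C_pow_dvd_iff, ← Polynomial.taylor_apply, Polynomial.X_pow_dvd_iff]
      intro r hr
      rw [Polynomial.taylor_coeff, heval]
      have := hw ⟨⟨a, r⟩, Finset.mem_sigma.mpr ⟨ha, Finset.mem_range.mpr hr⟩⟩
      rw [hermiteFun_apply] at this
      exact this
    have hP : (∏ a ∈ B, (Polynomial.X - Polynomial.C a) ^ (m a)) ∣ g := by
      refine Finset.prod_dvd_of_coprime ?_ hdvd
      intro a _ b _ hab
      exact (Polynomial.pairwise_coprime_X_sub_C (Function.injective_id) hab).pow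
    have hg0 : g = 0 := by
      by_contra hg0
      have h1 : ((∏ a ∈ B, (Polynomial.X - Polynomial.C a) ^ m a)).natDegree ≤ g.natDegree :=
        Polynomial.natDegree_le_of_dvd hP hg0
      have h2 : (∏ a ∈ B, (Polynomial.X - Polynomial.C a) ^ m a).natDegree = d + 1 := by
        rw [Polynomial.natDegree_prod_of_monic _ _
          (fun a _ => (Polynomial.monic_X_sub_C a).pow _)]
        simp only [Polynomial.natDegree_pow, Polynomial.natDegree_X_sub_C, mul_one]
        exact hd
      have h3 : g.natDegree ≤ d := by
        refine Polynomial.natDegree_sum_le_of_forall_le _ _ fun k _ => ?_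
        exact le_trans (Polynomial.natDegree_monomial_le _) (by omega)
      omega
    have := hcoeff (Fin.last d)
    rw [hg0, Polynomial.coeff_zero] at this
    exact this.symm
  have hspan := mem_span_of_iInf_ker_le_ker (𝕜 := F) hker
  obtain ⟨c, hc⟩ := (Submodule.mem_span_range_iff_exists_fun F).1 hspan
  refine ⟨fun a r => if h : (⟨a, r⟩ : Σ _ : F, ℕ) ∈ T then c ⟨⟨a, r⟩, h⟩ else 0, ?_⟩
  intro k hk
  have hkd : k < d + 1 := Nat.lt_succ_of_le hk
  have happ := LinearMap.congr_fun hc (Pi.single (⟨k, hkd⟩ : Fin (d + 1)) 1)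
  have hLt : ∀ t : Σ _ : F, ℕ, hermiteFun d t (Pi.single (⟨k, hkd⟩ : Fin (d + 1)) 1)
      = (k.choose t.2 : F) * t.1 ^ (k - t.2) := by
    intro t
    rw [hermiteFun_apply, Finset.sum_eq_single (⟨k, hkd⟩ : Fin (d + 1))]
    · simp
    · intro b _ hb
      simp [Pi.single_apply, hb]
    · intro h; exact absurd (Finset.mem_univ _) h
  rw [LinearMap.sum_apply] at happ
  simp only [LinearMap.smul_apply, smul_eq_mul, hLt, LinearMap.proj_apply] at happ
  have hproj : (Pi.single (M := fun _ : Fin (d + 1) => F) (⟨k, hkd⟩ : Fin (d + 1)) (1 : F)) (Fin.last d)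
      = if k = d then 1 else 0 := by
    by_cases h : k = d
    · subst h
      have he : (⟨k, hkd⟩ : Fin (k + 1)) = Fin.last k := rfl
      rw [he, Pi.single_eq_same, if_pos rfl]
    · have hne : (Fin.last d) ≠ (⟨k, hkd⟩ : Fin (d + 1)) :=
        Fin.ne_of_val_ne (by simp only [Fin.val_last]; exact fun hh => h hh.symm)
      rw [if_neg h]
      exact Pi.single_eq_of_ne hne 1
  rw [hproj] at happ
  rw [Finset.sum_sigma']
  rw [← happ, Finset.univ_eq_attach, ← Finset.sum_attach T
    (fun t => (if h : t ∈ T then c ⟨t, h⟩ else 0) * ((k.choose t.2 : F) * t.1 ^ (k - t.2)))]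
  exact Finset.sum_congr rfl fun t _ => by rw [dif_pos t.2]

private lemma eval_mvHasseDeriv {F : Type*} [CommRing F] {n : ℕ} (r : Fin n →₀ ℕ)
    (f : MvPolynomial (Fin n) F) (a : Fin n → F) :
    MvPolynomial.eval a (mvHasseDeriv r f)
      = ∑ β ∈ f.support, f.coeff β *
          ∏ i, (((β i).choose (r i) : F) * a i ^ (β i - r i)) := by
  unfold mvHasseDeriv
  rw [map_sum]
  refine Finset.sum_congr rfl fun β _ => ?_
  rw [MvPolynomial.eval_monomial, Finsupp.prod_fintype _ _ (fun i => pow_zero _),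
    Nat.cast_prod, Finset.prod_mul_distrib]
  simp only [Finsupp.tsub_apply]
  ring

theorem generalized_cns_multisets {F : Type*} [Field F] {n : ℕ}
    (f : MvPolynomial (Fin n) F) (α : Fin n →₀ ℕ)
    (hα : f.coeff α ≠ 0)
    (hmax : ∀ β : Fin n →₀ ℕ, (∀ i, α i ≤ β i) → β ≠ α → f.coeff β = 0)
    (A : Fin n → Finset F) (m : Fin n → F → ℕ)
    (hA : ∀ i, α i + 1 ≤ ∑ a ∈ A i, m i a) :
    ∃ (a : Fin n → F) (r : Fin n →₀ ℕ),
      (∀ i, a i ∈ A i ∧ r i < m i (a i)) ∧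
      MvPolynomial.eval a (mvHasseDeriv r f) ≠ 0 := by
  classical
  by_contra hcon
  push_neg at hcon
  -- shrink the multiplicities so that they sum to exactly `α i + 1`
  have h1 : ∀ i, ∃ g' : F → ℕ, (∀ a, g' a ≤ m i a) ∧ ∑ a ∈ A i, g' a = α i + 1 :=
    fun i => exists_le_sum_eq (A i) (m i) (α i + 1) (hA i)
  choose m' hm'le hm'sum using h1
  -- Hermite coefficients
  have h2 : ∀ i, ∃ c : F → ℕ → F, ∀ k, k ≤ α i →
      (∑ a ∈ A i, ∑ r ∈ Finset.range (m' i a),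
        c a r * ((k.choose r : F) * a ^ (k - r))) = if k = α i then 1 else 0 :=
    fun i => exists_hermite_coeffs (A i) (m' i) (α i) (hm'sum i)
  choose c hc using h2
  set T : Fin n → Finset (Σ _ : F, ℕ) :=
    fun i => (A i).sigma (fun a => Finset.range (m' i a)) with hTdef
  set S : F := ∑ p ∈ Fintype.piFinset T,
      (∏ i, c i (p i).1 (p i).2) *
        MvPolynomial.eval (fun i => (p i).1)
          (mvHasseDeriv (Finsupp.equivFunOnFinite.symm fun i => (p i).2) f) with hSdef
  have hS0 : S = 0 := by
    refine Finset.sum_eq_zero fun p hp => ?_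
    have hmem : ∀ i, p i ∈ T i := fun i => Fintype.mem_piFinset.mp hp i
    rw [hcon (fun i => (p i).1) (Finsupp.equivFunOnFinite.symm fun i => (p i).2)
      (fun i => by
        obtain ⟨h1', h2'⟩ := Finset.mem_sigma.mp (hmem i)
        refine ⟨h1', ?_⟩
        rw [Finsupp.coe_equivFunOnFinite_symm]
        exact lt_of_lt_of_le (Finset.mem_range.mp h2') (hm'le i _)), mul_zero]
  have hterm : ∀ p ∈ Fintype.piFinset T,
      (∏ i, c i (p i).1 (p i).2) *
        MvPolynomial.eval (fun i => (p i).1)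
          (mvHasseDeriv (Finsupp.equivFunOnFinite.symm fun i => (p i).2) f)
      = ∑ β ∈ f.support, f.coeff β *
          ∏ i, (c i (p i).1 (p i).2 *
            (((β i).choose ((p i).2) : F) * (p i).1 ^ (β i - (p i).2))) := by
    intro p _
    rw [eval_mvHasseDeriv, Finset.mul_sum]
    refine Finset.sum_congr rfl fun β _ => ?_
    simp only [Finsupp.coe_equivFunOnFinite_symm, Finset.prod_mul_distrib]
    ring
  have hS : S = f.coeff α := by
    rw [hSdef, Finset.sum_congr rfl hterm, Finset.sum_comm]
    have hfac : ∀ β : Fin n →₀ ℕ,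
        (∑ p ∈ Fintype.piFinset T, f.coeff β *
          ∏ i, (c i (p i).1 (p i).2 *
            (((β i).choose ((p i).2) : F) * (p i).1 ^ (β i - (p i).2))))
        = f.coeff β * ∏ i, ∑ t ∈ T i,
            (c i t.1 t.2 * (((β i).choose t.2 : F) * t.1 ^ (β i - t.2))) := by
      intro β
      rw [← Finset.mul_sum, Finset.prod_univ_sum]
    rw [Finset.sum_congr rfl fun β _ => hfac β]
    have hL : ∀ i, ∀ k, k ≤ α i →
        (∑ t ∈ T i, (c i t.1 t.2 * ((k.choose t.2 : F) * t.1 ^ (k - t.2))))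
          = if k = α i then 1 else 0 := by
      intro i k hk
      rw [hTdef, Finset.sum_sigma]
      exact hc i k hk
    rw [Finset.sum_eq_single_of_mem α (MvPolynomial.mem_support_iff.mpr hα)]
    · rw [Finset.prod_congr rfl (fun i _ => by rw [hL i (α i) le_rfl, if_pos rfl]),
        Finset.prod_const_one, mul_one]
    · intro β _ hβα
      by_cases hall : ∀ i, α i ≤ β i
      · rw [hmax β hall hβα, zero_mul]
      · push_neg at hall
        obtain ⟨i, hi⟩ := hall
        rw [Finset.prod_eq_zero (Finset.mem_univ i)
          (by rw [hL i (β i) (le_of_lt hi), if_neg (Nat.ne_of_lt hi)]), mul_zero]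
  exact hα (hS ▸ hS0)
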